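/- Let (Ω, F, μ) be a probability space, T ⊆ Ω a measurable event with p̃ := μ(T) ∈ (0, 1), P : Ω → ℝ and h : Ω → ℝ^H random variables with (h_j²)_j independent of (P, 1_T), and all relevant products integrable. Suppose additionally that the conditional expectations satisfy E[(1 − P)² | T] = A₁ and E[P² | Tᶜ] = A₂ · p̃ for real constants A₁, A₂. Then for each component j of the squared gradient G_j = (1_T − P)² · h_j², E[G_j] = E[h_j²] · p̃ · (A₁ + (1 − p̃) · A₂); in particular E[G_j] is proportional to the unigram probability p̃ with proportionality factor E[h_j²] · (A₁ + (1 − p̃) · A₂). -/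

import Mathlib

open MeasureTheory ProbabilityTheory

/-- **Expected squared gradient is proportional to the unigram probability.**
Under the assumptions of Theorem 1, if moreover `E[(1 − P)² | T] = A₁` and
`E[P² | Tᶜ] = A₂ · p̃` for real constants `A₁, A₂` (with `p̃ = μ T`), then for each
component `j` of the squared gradient `G_j = (1_T − P)² · h_j²`,
`E[G_j] = E[h_j²] · p̃ · (A₁ + (1 − p̃) · A₂)`;
in particular `E[G_j]` is proportional to `p̃`. -/
theorem expectation_squared_gradient_propto_unigram
    {Ω : Type*} [MeasurableSpace Ω] (μ : Measure Ω) [IsProbabilityMeasure μ]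
    (T : Set Ω) (hT : MeasurableSet T) (hT0 : 0 < μ T) (hT1 : μ T < 1)
    {H : Type*} [Fintype H]
    (P : Ω → ℝ) (h : Ω → H → ℝ)
    (G : H → Ω → ℝ)
    (hG : ∀ j ω, G j ω = (T.indicator (fun _ => (1 : ℝ)) ω - P ω) ^ 2 * (h ω j) ^ 2)
    (hIndep : IndepFun (fun ω => fun j => (h ω j) ^ 2)
      (fun ω => (P ω, T.indicator (fun _ => (1 : ℝ)) ω)) μ)
    (hG_int : ∀ j, Integrable (G j) μ)
    (hh_int : ∀ j, Integrable (fun ω => (h ω j) ^ 2) μ)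
    (hP1_int : Integrable (fun ω => (1 - P ω) ^ 2) (μ[|T]))
    (hP2_int : Integrable (fun ω => (P ω) ^ 2) (μ[|Tᶜ]))
    (A₁ A₂ : ℝ)
    (hA₁ : ∫ ω, (1 - P ω) ^ 2 ∂(μ[|T]) = A₁)
    (hA₂ : ∫ ω, (P ω) ^ 2 ∂(μ[|Tᶜ]) = A₂ * (μ T).toReal) :
    ∀ j, ∫ ω, G j ω ∂μ =
      (∫ ω, (h ω j) ^ 2 ∂μ) * (μ T).toReal * (A₁ + (1 - (μ T).toReal) * A₂) := by
  intro j
  have hTc : MeasurableSet Tᶜ := hT.compl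
  set p : ℝ := (μ T).toReal with hp
  set f : Ω → ℝ := fun ω => (T.indicator (fun _ => (1 : ℝ)) ω - P ω) ^ 2 with hfdef
  have hμT_ne_top : μ T ≠ ⊤ := (measure_lt_top μ T).ne
  have hμT_ne : μ T ≠ 0 := hT0.ne'
  have hμTc : μ Tᶜ = 1 - μ T := by
    rw [measure_compl hT hμT_ne_top, measure_univ]
  have hμTc_ne : μ Tᶜ ≠ 0 := by
    rw [hμTc]
    simp [tsub_eq_zero_iff_le, not_le, hT1, hT1.ne]
  have hμTc_ne_top : μ Tᶜ ≠ ⊤ := (measure_lt_top μ Tᶜ).ne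
  -- a.e. identifications on restricted measures
  have hfT : f =ᵐ[μ.restrict T] fun ω => (1 - P ω) ^ 2 := by
    filter_upwards [ae_restrict_mem hT] with ω hω
    simp [hfdef, Set.indicator_of_mem hω]
  have hfTc : f =ᵐ[μ.restrict Tᶜ] fun ω => (P ω) ^ 2 := by
    filter_upwards [ae_restrict_mem hTc] with ω hω
    simp [hfdef, Set.indicator_of_notMem (Set.notMem_compl_iff.mp (by simpa using hω) : ω ∈ Tᶜ)]
  -- integrability on restricted measures
  have hcondT : μ[|T] = (μ T)⁻¹ • μ.restrict T := by
    rw [ProbabilityTheory.cond]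
  have hcondTc : μ[|Tᶜ] = (μ Tᶜ)⁻¹ • μ.restrict Tᶜ := by
    rw [ProbabilityTheory.cond]
  have hint1 : Integrable (fun ω => (1 - P ω) ^ 2) (μ.restrict T) := by
    rw [hcondT] at hP1_int
    exact (integrable_smul_measure (ENNReal.inv_ne_zero.mpr hμT_ne_top)
      (ENNReal.inv_ne_top.mpr hμT_ne)).mp hP1_int
  have hint2 : Integrable (fun ω => (P ω) ^ 2) (μ.restrict Tᶜ) := by
    rw [hcondTc] at hP2_int
    exact (integrable_smul_measure (ENNReal.inv_ne_zero.mpr hμTc_ne_top)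
      (ENNReal.inv_ne_top.mpr hμTc_ne)).mp hP2_int
  have hfT_int : Integrable f (μ.restrict T) := hint1.congr hfT.symm
  have hfTc_int : Integrable f (μ.restrict Tᶜ) := hint2.congr hfTc.symm
  have hf_int : Integrable f μ := by
    rw [← Measure.restrict_add_restrict_compl (μ := μ) hT]
    exact (integrable_add_measure).mpr ⟨hfT_int, hfTc_int⟩
  -- values of the restricted integrals
  have hI1 : ∫ ω, f ω ∂(μ.restrict T) = p * A₁ := by
    rw [hcondT, integral_smul_measure] at hA₁
    rw [integral_congr_ae hfT]
    have hp0 : p ≠ 0 := by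
      simp [hp, ENNReal.toReal_ne_zero, hμT_ne, hμT_ne_top]
    have : ((μ T)⁻¹).toReal = p⁻¹ := by rw [ENNReal.toReal_inv]
    rw [this, smul_eq_mul] at hA₁
    field_simp at hA₁ ⊢
    linarith [hA₁]
  have hI2 : ∫ ω, f ω ∂(μ.restrict Tᶜ) = (1 - p) * (A₂ * p) := by
    rw [hcondTc, integral_smul_measure] at hA₂
    rw [integral_congr_ae hfTc]
    have hq : (μ Tᶜ).toReal = 1 - p := by
      rw [hμTc, ENNReal.toReal_sub_of_le hT1.le ENNReal.one_ne_top]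
      simp [hp]
    have hq0 : (μ Tᶜ).toReal ≠ 0 := by
      simp [ENNReal.toReal_ne_zero, hμTc_ne, hμTc_ne_top]
    have : ((μ Tᶜ)⁻¹).toReal = ((μ Tᶜ).toReal)⁻¹ := by rw [ENNReal.toReal_inv]
    rw [this, smul_eq_mul] at hA₂
    rw [← hq]
    field_simp at hA₂ ⊢
    linarith [hA₂]
  have hIf : ∫ ω, f ω ∂μ = p * A₁ + (1 - p) * (A₂ * p) := by
    conv_lhs => rw [← Measure.restrict_add_restrict_compl (μ := μ) hT]
    rw [integral_add_measure hfT_int hfTc_int, hI1, hI2]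
  -- independence
  have hφ : Measurable fun v : H → ℝ => v j := measurable_pi_apply j
  have hψ : Measurable fun q : ℝ × ℝ => (q.2 - q.1) ^ 2 :=
    ((measurable_snd.sub measurable_fst).pow_const 2)
  have hIndep' : IndepFun (fun ω => (h ω j) ^ 2) f μ := hIndep.comp hφ hψ
  have hmul : ∫ ω, (h ω j) ^ 2 * f ω ∂μ =
      (∫ ω, (h ω j) ^ 2 ∂μ) * ∫ ω, f ω ∂μ :=
    hIndep'.integral_fun_mul_eq_mul_integral (hh_int j).aestronglyMeasurable hf_int.aestronglyMeasurable
  have hGf : ∀ ω, G j ω = (h ω j) ^ 2 * f ω := fun ω => by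
    rw [hG j ω]; ring
  calc ∫ ω, G j ω ∂μ = ∫ ω, (h ω j) ^ 2 * f ω ∂μ := by
        exact integral_congr_ae (Filter.Eventually.of_forall hGf)
    _ = (∫ ω, (h ω j) ^ 2 ∂μ) * ∫ ω, f ω ∂μ := hmul
    _ = (∫ ω, (h ω j) ^ 2 ∂μ) * p * (A₁ + (1 - p) * A₂) := by
        rw [hIf]; ring
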